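/- The liquid price of anarchy of the VCG position mechanism under the no-over assumption is at most 2: for every position game induced by VCG and every pure Nash equilibrium b, 2·LW(σ(b)) ≥ OPT. -/

import Mathlib

/-! General position games with `n` players and `n` positions.
`α j` is the CTR of position `j`, `v i` and `c i` are the value and budget of player
`i`, an assignment is a permutation `σ` sending each player to her position, and
`σ.symm j` is the player occupying position `j`. -/

/-- A ranking `σ` is consistent with scalar bids `b` if players in earlier positions
bid at least as much (non-increasing bid order). -/
def RankConsistent {n : ℕ} (b : Fin n → ℝ) (σ : Equiv.Perm (Fin n)) : Prop :=
  ∀ i j : Fin n, σ i < σ j → b j ≤ b i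

/-- The bid of the player ranked just below player `i` (zero for the last position). -/
noncomputable def nextBid {n : ℕ} (b : Fin n → ℝ) (σ : Equiv.Perm (Fin n)) (i : Fin n) : ℝ :=
  if h : (σ i : ℕ) + 1 < n then b (σ.symm ⟨(σ i : ℕ) + 1, h⟩) else 0

/-- GSP utility: player `i` gets CTR of her position times her value, and pays the
next highest bid per click. -/
noncomputable def gspUtil {n : ℕ} (α v : Fin n → ℝ) (b : Fin n → ℝ)
    (σ : Equiv.Perm (Fin n)) (i : Fin n) : ℝ :=
  α (σ i) * v i - α (σ i) * nextBid b σ i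

/-- The no-over assumption for a bid `y` of player `i` occupying position `p`:
CTR times bid is at most the minimum of the player's total value and her budget. -/
def NoOverAt {n : ℕ} (α v c : Fin n → ℝ) (i p : Fin n) (y : ℝ) : Prop :=
  α p * y ≤ min (α p * v i) (c i)

/-- Pure Nash equilibrium of the GSP position game under the no-over assumption:
bids are non-negative, `σ` ranks the players by bids, everyone satisfies no-over, and
no player can improve her utility by a unilateral no-over deviation, whatever
consistent ranking results. -/
def GspEquilibrium {n : ℕ} (α v c : Fin n → ℝ) (b : Fin n → ℝ)
    (σ : Equiv.Perm (Fin n)) : Prop :=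
  (∀ i, 0 ≤ b i) ∧ RankConsistent b σ ∧ (∀ i, NoOverAt α v c i (σ i) (b i)) ∧
    ∀ (i : Fin n) (y : ℝ) (τ : Equiv.Perm (Fin n)), 0 ≤ y →
      RankConsistent (Function.update b i y) τ → NoOverAt α v c i (τ i) y →
        gspUtil α v (Function.update b i y) τ i ≤ gspUtil α v b σ i

/-- Total VCG payment of player `i`: the externality `∑_{k > σ i} b_{π(k)} (α_{k-1} - α_k)`. -/
noncomputable def vcgPay {n : ℕ} (α : Fin n → ℝ) (b : Fin n → ℝ)
    (σ : Equiv.Perm (Fin n)) (i : Fin n) : ℝ :=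
  ∑ k ∈ Finset.univ.filter (fun k : Fin n => σ i < k),
    b (σ.symm k) * (α ⟨(k : ℕ) - 1, lt_of_le_of_lt (Nat.sub_le _ _) k.isLt⟩ - α k)

/-- VCG utility of player `i`. -/
noncomputable def vcgUtil {n : ℕ} (α v : Fin n → ℝ) (b : Fin n → ℝ)
    (σ : Equiv.Perm (Fin n)) (i : Fin n) : ℝ :=
  α (σ i) * v i - vcgPay α b σ i

/-- Pure Nash equilibrium of the VCG position game under the no-over assumption. -/
def VcgEquilibrium {n : ℕ} (α v c : Fin n → ℝ) (b : Fin n → ℝ)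
    (σ : Equiv.Perm (Fin n)) : Prop :=
  (∀ i, 0 ≤ b i) ∧ RankConsistent b σ ∧ (∀ i, NoOverAt α v c i (σ i) (b i)) ∧
    ∀ (i : Fin n) (y : ℝ) (τ : Equiv.Perm (Fin n)), 0 ≤ y →
      RankConsistent (Function.update b i y) τ → NoOverAt α v c i (τ i) y →
        vcgUtil α v (Function.update b i y) τ i ≤ vcgUtil α v b σ i

/-- EGFP consistency: positions are allocated sequentially, so the player winning
position `p` bids at least as much for `p` as every player allocated at `p` or later. -/
def EgfpConsistent {n : ℕ} (b : Fin n → Fin n → ℝ) (σ : Equiv.Perm (Fin n)) : Prop :=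
  ∀ (p i : Fin n), p ≤ σ i → b i p ≤ b (σ.symm p) p

/-- EGFP utility: first-price payments, each winner pays her own bid for her position. -/
noncomputable def egfpUtil {n : ℕ} (α v : Fin n → ℝ) (b : Fin n → Fin n → ℝ)
    (σ : Equiv.Perm (Fin n)) (i : Fin n) : ℝ :=
  α (σ i) * v i - b i (σ i)

/-- Pure Nash equilibrium of the EGFP position game, with payments within budgets. -/
def EgfpEquilibrium {n : ℕ} (α v c : Fin n → ℝ) (b : Fin n → Fin n → ℝ)
    (σ : Equiv.Perm (Fin n)) : Prop :=
  (∀ i p, 0 ≤ b i p) ∧ EgfpConsistent b σ ∧ (∀ i, b i (σ i) ≤ c i) ∧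
    ∀ (i : Fin n) (y : Fin n → ℝ) (τ : Equiv.Perm (Fin n)), (∀ p, 0 ≤ y p) →
      EgfpConsistent (Function.update b i y) τ → y (τ i) ≤ c i →
        egfpUtil α v (Function.update b i y) τ i ≤ egfpUtil α v b σ i

/-- Liquid welfare of the assignment `σ`: each player's value is capped by her budget. -/
noncomputable def liquidWelfare {n : ℕ} (α v c : Fin n → ℝ) (σ : Equiv.Perm (Fin n)) : ℝ :=
  ∑ i, min (α (σ i) * v i) (c i)

/-- The liquid price of anarchy of the VCG position mechanism under the no-over
assumption is at most 2: at every pure Nash equilibrium (b, σ) of every VCG position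
game, twice the liquid welfare of σ is at least the liquid welfare of any assignment,
in particular the optimal one. -/
lemma bids_antitone {n : ℕ} {b : Fin n → ℝ} {σ : Equiv.Perm (Fin n)}
    (h : RankConsistent b σ) {k l : Fin n} (hkl : k ≤ l) :
    b (σ.symm l) ≤ b (σ.symm k) := by
  rcases eq_or_lt_of_le hkl with rfl | hkl
  · exact le_refl _
  · exact h (σ.symm k) (σ.symm l) (by simpa using hkl)

lemma vcgPay_nonneg {n : ℕ} (α : Fin n → ℝ) (hα : Antitone α) (b : Fin n → ℝ)
    (hb : ∀ i, 0 ≤ b i) (σ : Equiv.Perm (Fin n)) (i : Fin n) :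
    0 ≤ vcgPay α b σ i := by
  apply Finset.sum_nonneg
  intro k hk
  apply mul_nonneg (hb _)
  have hle : (⟨(k : ℕ) - 1, lt_of_le_of_lt (Nat.sub_le _ _) k.isLt⟩ : Fin n) ≤ k := by
    simp [Fin.le_def]
  exact sub_nonneg.2 (hα hle)

lemma sum_tele {n : ℕ} (α : Fin n → ℝ) (q : Fin n) :
    ∑ k ∈ Finset.univ.filter (fun k : Fin n => q < k),
      (α ⟨(k : ℕ) - 1, lt_of_le_of_lt (Nat.sub_le _ _) k.isLt⟩ - α k)
      = α q - α ⟨n - 1, by have := q.isLt; omega⟩ := by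
  have hq := q.isLt
  have hf : ∀ t : ℕ, min ((q : ℕ) + t) (n - 1) < n := by intro t; omega
  set f : ℕ → ℝ := fun t => α ⟨min ((q : ℕ) + t) (n - 1), hf t⟩ with hfdef
  have key : ∑ k ∈ Finset.univ.filter (fun k : Fin n => q < k),
      (α ⟨(k : ℕ) - 1, lt_of_le_of_lt (Nat.sub_le _ _) k.isLt⟩ - α k)
      = ∑ t ∈ Finset.range (n - 1 - (q : ℕ)), (f t - f (t + 1)) := by
    apply Finset.sum_nbij' (fun k : Fin n => (k : ℕ) - (q : ℕ) - 1)
      (fun t : ℕ => (⟨min ((q : ℕ) + 1 + t) (n - 1), by omega⟩ : Fin n))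
    · intro a ha
      simp only [Finset.mem_filter, Finset.mem_univ, true_and, Fin.lt_def] at ha
      simp only [Finset.mem_range]
      have := a.isLt
      omega
    · intro t ht
      simp only [Finset.mem_range] at ht
      simp only [Finset.mem_filter, Finset.mem_univ, true_and, Fin.lt_def, Fin.val_mk]
      omega
    · intro a ha
      simp only [Finset.mem_filter, Finset.mem_univ, true_and, Fin.lt_def] at ha
      have := a.isLt
      apply Fin.ext
      simp only [Fin.val_mk]
      omega
    · intro t ht
      simp only [Finset.mem_range] at ht
      simp only [Fin.val_mk]
      omega
    · intro a ha
      simp only [Finset.mem_filter, Finset.mem_univ, true_and, Fin.lt_def] at ha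
      have := a.isLt
      simp only [hfdef]
      congr 2 <;> [skip; skip] <;> apply Fin.ext <;> simp only [Fin.val_mk] <;> omega
  rw [key, Finset.sum_range_sub' f]
  have h0 : f 0 = α q := by
    simp only [hfdef]
    congr 1
    apply Fin.ext
    simp only [Fin.val_mk]
    omega
  have h1 : f (n - 1 - (q : ℕ)) = α ⟨n - 1, by omega⟩ := by
    simp only [hfdef]
    congr 1
    apply Fin.ext
    simp only [Fin.val_mk]
    omega
  rw [h0, h1]

lemma vcgPay_le {n : ℕ} (α : Fin n → ℝ) (hα : Antitone α) (hα0 : ∀ j, 0 ≤ α j)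
    (b : Fin n → ℝ) (σ : Equiv.Perm (Fin n)) (i : Fin n) (M : ℝ) (hM : 0 ≤ M)
    (hb : ∀ k : Fin n, σ i < k → b (σ.symm k) ≤ M) :
    vcgPay α b σ i ≤ α (σ i) * M := by
  have h1 : vcgPay α b σ i ≤ ∑ k ∈ Finset.univ.filter (fun k : Fin n => σ i < k),
      M * (α ⟨(k : ℕ) - 1, lt_of_le_of_lt (Nat.sub_le _ _) k.isLt⟩ - α k) := by
    apply Finset.sum_le_sum
    intro k hk
    simp only [Finset.mem_filter, Finset.mem_univ, true_and] at hk
    have hd : 0 ≤ α ⟨(k : ℕ) - 1, lt_of_le_of_lt (Nat.sub_le _ _) k.isLt⟩ - α k := by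
      apply sub_nonneg.2
      apply hα
      simp [Fin.le_def]
    exact mul_le_mul_of_nonneg_right (hb k hk) hd
  rw [← Finset.mul_sum, sum_tele] at h1
  have h2 : M * (α (σ i) - α ⟨n - 1, by have := (σ i).isLt; omega⟩) ≤ M * α (σ i) := by
    have := hα0 (⟨n - 1, by have := (σ i).isLt; omega⟩ : Fin n)
    nlinarith
  linarith [mul_comm M (α (σ i))]

def shiftPerm {n : ℕ} (p q : Fin n) (hpq : (p:ℕ) < (q:ℕ)) : Equiv.Perm (Fin n) where
  toFun k := if (k:ℕ) = (q:ℕ) then p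
    else if h : (p:ℕ) ≤ (k:ℕ) ∧ (k:ℕ) < (q:ℕ) then ⟨(k:ℕ)+1, by have := q.isLt; omega⟩ else k
  invFun k := if (k:ℕ) = (p:ℕ) then q
    else if h : (p:ℕ) < (k:ℕ) ∧ (k:ℕ) ≤ (q:ℕ) then ⟨(k:ℕ)-1, by have := k.isLt; omega⟩ else k
  left_inv := by
    intro k
    have hq := q.isLt
    have hpq' := hpq
    simp only
    split_ifs
    any_goals (apply Fin.ext; simp only [Fin.val_mk] at *; omega)
    all_goals (apply Fin.ext; omega)
  right_inv := by
    intro k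
    have hq := q.isLt
    have hpq' := hpq
    simp only
    split_ifs
    any_goals (apply Fin.ext; simp only [Fin.val_mk] at *; omega)
    all_goals (apply Fin.ext; omega)

lemma shiftPerm_apply {n : ℕ} (p q : Fin n) (hpq : (p:ℕ) < (q:ℕ)) (k : Fin n) :
    shiftPerm p q hpq k = if (k:ℕ) = (q:ℕ) then p
      else if h : (p:ℕ) ≤ (k:ℕ) ∧ (k:ℕ) < (q:ℕ) then ⟨(k:ℕ)+1, by have := q.isLt; omega⟩
      else k := rfl

lemma shiftPerm_symm_apply {n : ℕ} (p q : Fin n) (hpq : (p:ℕ) < (q:ℕ)) (k : Fin n) :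
    (shiftPerm p q hpq).symm k = if (k:ℕ) = (p:ℕ) then q
      else if h : (p:ℕ) < (k:ℕ) ∧ (k:ℕ) ≤ (q:ℕ) then ⟨(k:ℕ)-1, by have := k.isLt; omega⟩
      else k := rfl

lemma key_ineq {n : ℕ} (α v c : Fin n → ℝ) (hα : Antitone α) (hαpos : ∀ j, 0 < α j)
    (hv : ∀ i, 0 ≤ v i) (hc : ∀ i, 0 ≤ c i)
    (b : Fin n → ℝ) (σ : Equiv.Perm (Fin n)) (heq : VcgEquilibrium α v c b σ)
    (i p : Fin n) :
    min (α p * v i) (c i) ≤ min (α (σ i) * v i) (c i) + α p * b (σ.symm p) := by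
  obtain ⟨hb0, hrc, hno, hnash⟩ := heq
  have hαp := hαpos p
  have hβ0 : 0 ≤ b (σ.symm p) := hb0 _
  have hlw0 : 0 ≤ min (α (σ i) * v i) (c i) :=
    le_min (mul_nonneg (hαpos _).le (hv i)) (hc i)
  have hmin : α p * min (v i) (c i / α p) = min (α p * v i) (c i) := by
    rw [mul_min_of_nonneg _ _ hαp.le, mul_div_cancel₀ _ (ne_of_gt hαp)]
  set m := min (v i) (c i / α p) with hm
  have hm0 : 0 ≤ m := le_min (hv i) (div_nonneg (hc i) hαp.le)
  by_cases h1 : α p ≤ α (σ i)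
  · have : min (α p * v i) (c i) ≤ min (α (σ i) * v i) (c i) :=
      le_min ((min_le_left _ _).trans (mul_le_mul_of_nonneg_right h1 (hv i)))
        (min_le_right _ _)
    nlinarith
  by_cases h2 : c i ≤ α (σ i) * v i
  · have h3 : min (α (σ i) * v i) (c i) = c i := min_eq_right h2
    nlinarith [min_le_right (α p * v i) (c i)]
  push_neg at h1 h2
  by_cases h3 : m ≤ b (σ.symm p)
  · have : min (α p * v i) (c i) ≤ α p * b (σ.symm p) := by
      rw [← hmin]
      exact mul_le_mul_of_nonneg_left h3 hαp.le
    linarith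
  push_neg at h3
  -- Case 4 : deviation
  have hpq : (p : ℕ) < (σ i : ℕ) := by
    by_contra h
    push_neg at h
    exact absurd (hα (show σ i ≤ p from by rwa [Fin.le_def])) (not_le.2 h1)
  have hp1 : ∀ (hp0 : 0 < (p:ℕ)), ((p:ℕ) - 1) < n := by
    intro _; have := p.isLt; omega
  set y := if hp0 : 0 < (p:ℕ) then min m (b (σ.symm ⟨(p:ℕ)-1, hp1 hp0⟩)) else m with hy
  have hy0 : 0 ≤ y := by
    rw [hy]; split_ifs
    · exact le_min hm0 (hb0 _)
    · exact hm0
  have hym : y ≤ m := by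
    rw [hy]; split_ifs
    · exact min_le_left _ _
    · exact le_refl _
  have hyβ : b (σ.symm p) ≤ y := by
    rw [hy]; split_ifs with hp0
    · exact le_min h3.le (bids_antitone hrc (show (⟨(p:ℕ)-1, hp1 hp0⟩ : Fin n) ≤ p by
        simp only [Fin.le_def, Fin.val_mk]; omega))
    · exact h3.le
  have hylt : ∀ k : Fin n, k < p → y ≤ b (σ.symm k) := by
    intro k hk
    rw [Fin.lt_def] at hk
    have hp0 : 0 < (p:ℕ) := by omega
    rw [hy, dif_pos hp0]
    exact (min_le_right _ _).trans (bids_antitone hrc (show k ≤ (⟨(p:ℕ)-1, hp1 hp0⟩ : Fin n) by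
      simp only [Fin.le_def, Fin.val_mk]; omega))
  set τ := σ.trans (shiftPerm p (σ i) hpq) with hτ
  have hτi : τ i = p := by
    simp [hτ, Equiv.trans_apply, shiftPerm_apply]
  have hτsymm : ∀ k : Fin n, τ.symm k = σ.symm ((shiftPerm p (σ i) hpq).symm k) := by
    intro k; simp [hτ, Equiv.symm_trans_apply]
  -- occupant characterization
  set f : Fin n → ℝ := fun k => Function.update b i y (τ.symm k) with hfdef
  have hτsymm_ne : ∀ k : Fin n, k ≠ p → τ.symm k ≠ i := by
    intro k hk h
    apply hk
    have : τ i = k := by rw [← h, Equiv.apply_symm_apply]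
    rw [← this, hτi]
  have hfp : f p = y := by
    have : τ.symm p = i := by
      rw [show p = τ i from hτi.symm, Equiv.symm_apply_apply]
    show Function.update b i y (τ.symm p) = y
    rw [this, Function.update_self]
  have hflt : ∀ k : Fin n, k < p → f k = b (σ.symm k) ∧ y ≤ f k := by
    intro k hk
    rw [Fin.lt_def] at hk
    have hsy : (shiftPerm p (σ i) hpq).symm k = k := by
      rw [shiftPerm_symm_apply]
      rw [if_neg (by omega), dif_neg (by omega)]
    have hne : τ.symm k ≠ i := hτsymm_ne k (by intro h; rw [h] at hk; omega)
    constructor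
    · rw [hfdef]
      simp only
      rw [Function.update_of_ne hne, hτsymm, hsy]
    · rw [hfdef]
      simp only
      rw [Function.update_of_ne hne, hτsymm, hsy]
      exact hylt k (by rwa [Fin.lt_def])
  have hgfact : ∀ k : Fin n, p < k →
      (p:ℕ) ≤ (((shiftPerm p (σ i) hpq).symm k : Fin n) : ℕ) ∧
      (((shiftPerm p (σ i) hpq).symm k : Fin n) : ℕ) ≠ ((σ i : Fin n) : ℕ) ∧
      (((k:ℕ) ≤ ((σ i : Fin n) : ℕ) → (((shiftPerm p (σ i) hpq).symm k : Fin n) : ℕ) = (k:ℕ) - 1) ∧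
       (((σ i : Fin n) : ℕ) < (k:ℕ) → (((shiftPerm p (σ i) hpq).symm k : Fin n) : ℕ) = (k:ℕ))) := by
    intro k hk
    rw [Fin.lt_def] at hk
    rw [shiftPerm_symm_apply]
    by_cases hk2 : (k:ℕ) ≤ ((σ i : Fin n) : ℕ)
    · rw [if_neg (by omega), dif_pos (by omega)]
      simp only [Fin.val_mk]
      exact ⟨by omega, by omega, fun _ => trivial, fun h => by omega⟩
    · rw [if_neg (by omega), dif_neg (by omega)]
      exact ⟨by omega, by omega, fun h => by omega, fun _ => rfl⟩
  have hfgt : ∀ k : Fin n, p < k → f k ≤ b (σ.symm p) := by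
    intro k hk
    obtain ⟨hg1, hg2, _⟩ := hgfact k hk
    have hne : τ.symm k ≠ i := hτsymm_ne k (ne_of_gt hk)
    rw [hfdef]
    simp only
    rw [Function.update_of_ne hne, hτsymm]
    exact bids_antitone hrc (by rw [Fin.le_def]; exact hg1)
  have hfmono : ∀ k l : Fin n, k ≤ l → f l ≤ f k := by
    intro k l hkl
    rcases lt_trichotomy k p with hk | hk | hk
    · rcases lt_trichotomy l p with hl | hl | hl
      · rw [(hflt k hk).1, (hflt l hl).1]
        exact bids_antitone hrc hkl
      · rw [hl, hfp]; exact (hflt k hk).2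
      · exact le_trans (le_trans (hfgt l hl) hyβ) (hflt k hk).2
    · rw [hk, hfp]
      rcases eq_or_lt_of_le hkl with rfl | hl
      · rw [hk, hfp]
      · rw [hk] at hl
        exact le_trans (hfgt l hl) hyβ
    · have hl : p < l := lt_of_lt_of_le hk hkl
      obtain ⟨hgk1, hgk2, hgk3, hgk4⟩ := hgfact k hk
      obtain ⟨hgl1, hgl2, hgl3, hgl4⟩ := hgfact l hl
      have hnek : τ.symm k ≠ i := hτsymm_ne k (ne_of_gt hk)
      have hnel : τ.symm l ≠ i := hτsymm_ne l (ne_of_gt hl)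
      rw [hfdef]
      simp only
      rw [Function.update_of_ne hnek, Function.update_of_ne hnel, hτsymm, hτsymm]
      apply bids_antitone hrc
      rw [Fin.le_def]
      rw [Fin.le_def] at hkl
      rw [Fin.lt_def] at hk hl
      by_cases hks : (k:ℕ) ≤ ((σ i : Fin n) : ℕ) <;> by_cases hls : (l:ℕ) ≤ ((σ i : Fin n) : ℕ) <;>
        omega
  have hrcτ : RankConsistent (Function.update b i y) τ := by
    intro a a' ha
    have h := hfmono (τ a) (τ a') ha.le
    have e1 : τ.symm (τ a) = a := Equiv.symm_apply_apply τ a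
    have e2 : τ.symm (τ a') = a' := Equiv.symm_apply_apply τ a'
    simp only [hfdef] at h
    rw [e1, e2] at h
    exact h
  have hnoτ : NoOverAt α v c i (τ i) y := by
    rw [hτi]
    unfold NoOverAt
    calc α p * y ≤ α p * m := mul_le_mul_of_nonneg_left hym hαp.le
      _ = min (α p * v i) (c i) := hmin
  have hN := hnash i y τ hy0 hrcτ hnoτ
  have hpay' : vcgPay α (Function.update b i y) τ i ≤ α p * b (σ.symm p) := by
    have := vcgPay_le α hα (fun j => (hαpos j).le) (Function.update b i y) τ i
      (b (σ.symm p)) hβ0 (fun k hk => by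
        rw [hτi] at hk
        exact hfgt k hk)
    rwa [hτi] at this
  have hpay0 : 0 ≤ vcgPay α b σ i := vcgPay_nonneg α hα b hb0 σ i
  have hu1 : α p * v i - α p * b (σ.symm p) ≤ vcgUtil α v (Function.update b i y) τ i := by
    unfold vcgUtil
    rw [hτi]
    linarith
  have hu2 : vcgUtil α v b σ i ≤ α (σ i) * v i := by
    unfold vcgUtil
    linarith
  have hfin : min (α p * v i) (c i) ≤ α p * v i := min_le_left _ _
  have hmin2 : min (α (σ i) * v i) (c i) = α (σ i) * v i := min_eq_left h2.le
  linarith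

theorem stmt15 {n : ℕ} (α v c : Fin n → ℝ) (hα : Antitone α) (hαpos : ∀ j, 0 < α j)
    (hv : ∀ i, 0 ≤ v i) (hc : ∀ i, 0 ≤ c i)
    (b : Fin n → ℝ) (σ : Equiv.Perm (Fin n)) (heq : VcgEquilibrium α v c b σ) :
    ∀ o : Equiv.Perm (Fin n), 2 * liquidWelfare α v c σ ≥ liquidWelfare α v c o := by
  intro o
  have hkey : ∀ i : Fin n, min (α (o i) * v i) (c i)
      ≤ min (α (σ i) * v i) (c i) + α (o i) * b (σ.symm (o i)) := fun i =>
    key_ineq α v c hα hαpos hv hc b σ heq i (o i)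
  have hsum : liquidWelfare α v c o
      ≤ liquidWelfare α v c σ + ∑ i, α (o i) * b (σ.symm (o i)) := by
    unfold liquidWelfare
    rw [← Finset.sum_add_distrib]
    exact Finset.sum_le_sum (fun i _ => hkey i)
  have h1 : ∑ i, α (o i) * b (σ.symm (o i)) = ∑ k, α k * b (σ.symm k) :=
    Equiv.sum_comp o (fun k => α k * b (σ.symm k))
  have h2 : ∑ k, α k * b (σ.symm k) = ∑ j, α (σ j) * b j := by
    have h := Equiv.sum_comp σ (fun k => α k * b (σ.symm k))
    simpa [Equiv.symm_apply_apply] using h.symm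
  have h3 : ∑ j, α (σ j) * b j ≤ liquidWelfare α v c σ := by
    unfold liquidWelfare
    exact Finset.sum_le_sum (fun j _ => heq.2.2.1 j)
  rw [ge_iff_le]
  calc liquidWelfare α v c o
      ≤ liquidWelfare α v c σ + ∑ i, α (o i) * b (σ.symm (o i)) := hsum
    _ ≤ liquidWelfare α v c σ + liquidWelfare α v c σ := by rw [h1, h2]; linarith
    _ = 2 * liquidWelfare α v c σ := by ring
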